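/- Fitted policy evaluation on-policy recursion (deterministic core of HPE): Let π be a policy of a finite discounted MDP, ν a probability distribution on S×A, λ ≥ 1, ε ≥ 0, and ε_be ∈ [0, 2/(1−γ)]. Let f₀, f₁, …, f_K : S×A → [0, 1/(1−γ)] be such that for every k ∈ {1,…,K} there exists g_k : S×A → [0, 1/(1−γ)] with |g_k(s,a) − (T^π f_{k−1})(s,a)| ≤ ε_be for all (s,a), and the regression oracle inequality E_{ν}[(f_k − T^π f_{k−1})²] + λ·E_{d^π}[(f_k − Q^π)²] ≤ E_{ν}[(g_k − T^π f_{k−1})²] + λ·E_{d^π}[(g_k − Q^π)²] + ε holds. Then for every k ∈ {1,…,K}, E_{(s,a)∼d^π}[(f_k(s,a) − Q^π(s,a))²] ≤ γ^{k−1}/(1−γ)² + (1/(1−γ))·(6·ε_be/(1−γ) + ε/λ). -/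

import Mathlib

open Finset

structure FinMDP (S A : Type*) [Fintype S] [Fintype A] where
  P : S → A → S → ℝ
  P_nonneg : ∀ s a s', 0 ≤ P s a s'
  P_sum : ∀ s a, ∑ s', P s a s' = 1
  r : S → A → ℝ
  r_nonneg : ∀ s a, 0 ≤ r s a
  r_le_one : ∀ s a, r s a ≤ 1
  disc : ℝ
  disc_pos : 0 < disc
  disc_lt_one : disc < 1
  init : S → ℝ
  init_nonneg : ∀ s, 0 ≤ init s
  init_sum : ∑ s, init s = 1

variable {S A : Type*} [Fintype S] [Fintype A] [Nonempty S] [Nonempty A]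

/-- A policy assigns to each state a probability mass function over actions. -/
def IsPolicy (π : S → A → ℝ) : Prop :=
  (∀ s a, 0 ≤ π s a) ∧ ∀ s, ∑ a, π s a = 1

/-- The Bellman operator `T^π`. -/
noncomputable def FinMDP.bellman (M : FinMDP S A) (π f : S → A → ℝ) (s : S) (a : A) : ℝ :=
  M.r s a + M.disc * ∑ s', M.P s a s' * ∑ a', π s' a' * f s' a'

/-- `Q` is the action-value function of `π`, i.e. satisfies the Bellman equation. -/
def FinMDP.IsQ (M : FinMDP S A) (π Q : S → A → ℝ) : Prop :=
  ∀ s a, Q s a = M.bellman π Q s a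

/-- The state value `V^π(s)` induced by a `Q`-function. -/
noncomputable def vOf (π Q : S → A → ℝ) (s : S) : ℝ := ∑ a, π s a * Q s a

/-- The scalar value `V^π = E_{s ∼ μ₀}[V^π(s)]`. -/
noncomputable def FinMDP.scalarV (M : FinMDP S A) (π Q : S → A → ℝ) : ℝ :=
  ∑ s, M.init s * vOf π Q s

/-- Distribution of the state at time `t` under policy `π`. -/
noncomputable def FinMDP.stateDist (M : FinMDP S A) (π : S → A → ℝ) : ℕ → S → ℝ
  | 0 => M.init
  | (t + 1) => fun s' => ∑ s, ∑ a, FinMDP.stateDist M π t s * π s a * M.P s a s'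

/-- The discounted occupancy measure `d^π(s,a) = (1-γ) ∑_t γ^t Pr^π(s_t = s, a_t = a)`. -/
noncomputable def FinMDP.occ (M : FinMDP S A) (π : S → A → ℝ) (s : S) (a : A) : ℝ :=
  (1 - M.disc) * ∑' t : ℕ, M.disc ^ t * M.stateDist π t s * π s a

section Aux

/-- Weighted Jensen: `(∑ p x)² ≤ ∑ p x²` when `p` is a pmf. -/
lemma jensen_sq {ι : Type*} (s : Finset ι) (p x : ι → ℝ) (hp : ∀ i ∈ s, 0 ≤ p i)
    (hp1 : ∑ i ∈ s, p i = 1) : (∑ i ∈ s, p i * x i) ^ 2 ≤ ∑ i ∈ s, p i * x i ^ 2 := by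
  have := Finset.sum_sq_le_sum_mul_sum_of_sq_eq_mul s (r := fun i => p i * x i)
    (f := p) (g := fun i => p i * x i ^ 2) hp
    (fun i hi => mul_nonneg (hp i hi) (sq_nonneg _)) (fun i hi => by ring)
  simpa [hp1] using this

variable {S A : Type*} [Fintype S] [Fintype A] [Nonempty S] [Nonempty A]

lemma stateDist_nonneg (M : FinMDP S A) (π : S → A → ℝ) (hπ : IsPolicy π) :
    ∀ t s, 0 ≤ M.stateDist π t s := by
  intro t
  induction t with
  | zero => exact M.init_nonneg
  | succ t ih =>
    intro s'
    refine Finset.sum_nonneg fun s _ => Finset.sum_nonneg fun a _ => ?_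
    exact mul_nonneg (mul_nonneg (ih s) (hπ.1 s a)) (M.P_nonneg s a s')

lemma stateDist_sum_one (M : FinMDP S A) (π : S → A → ℝ) (hπ : IsPolicy π) :
    ∀ t, ∑ s, M.stateDist π t s = 1 := by
  intro t
  induction t with
  | zero => exact M.init_sum
  | succ t ih =>
    show ∑ s', ∑ s, ∑ a, M.stateDist π t s * π s a * M.P s a s' = 1
    rw [Finset.sum_comm]
    have : ∀ s, ∑ s', ∑ a, M.stateDist π t s * π s a * M.P s a s'
        = M.stateDist π t s := by
      intro s
      rw [Finset.sum_comm]
      have : ∀ a, ∑ s', M.stateDist π t s * π s a * M.P s a s'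
          = M.stateDist π t s * π s a := by
        intro a
        rw [← Finset.mul_sum, M.P_sum, mul_one]
      rw [Finset.sum_congr rfl fun a _ => this a, ← Finset.mul_sum, hπ.2, mul_one]
    rw [Finset.sum_congr rfl fun s _ => this s, ih]

lemma stateDist_le_one (M : FinMDP S A) (π : S → A → ℝ) (hπ : IsPolicy π) (t : ℕ) (s : S) :
    M.stateDist π t s ≤ 1 := by
  have := Finset.single_le_sum (f := fun s => M.stateDist π t s)
    (fun s _ => stateDist_nonneg M π hπ t s) (Finset.mem_univ s)
  rw [stateDist_sum_one M π hπ t] at this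
  exact this

lemma pi_le_one (π : S → A → ℝ) (hπ : IsPolicy π) (s : S) (a : A) : π s a ≤ 1 := by
  have := Finset.single_le_sum (f := fun a => π s a)
    (fun a _ => hπ.1 s a) (Finset.mem_univ a)
  rw [hπ.2 s] at this
  exact this

lemma occ_summable (M : FinMDP S A) (π : S → A → ℝ) (hπ : IsPolicy π) (s : S) (a : A)
    (c : ℝ) : Summable (fun t => M.disc ^ t * M.stateDist π t s * π s a * c) := by
  have hsum : Summable (fun t : ℕ => M.disc ^ t * |c|) :=
    (summable_geometric_of_lt_one M.disc_pos.le M.disc_lt_one).mul_right _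
  refine Summable.of_norm_bounded hsum fun t => ?_
  have h0 : (0:ℝ) ≤ M.disc ^ t := pow_nonneg M.disc_pos.le t
  have h1 : M.stateDist π t s * π s a ≤ 1 :=
    mul_le_one₀ (stateDist_le_one M π hπ t s) (hπ.1 s a) (pi_le_one π hπ s a)
  have h2 : 0 ≤ M.stateDist π t s * π s a :=
    mul_nonneg (stateDist_nonneg M π hπ t s) (hπ.1 s a)
  have hμ := stateDist_nonneg M π hπ t s
  have hπ0 := hπ.1 s a
  rw [Real.norm_eq_abs, abs_mul, abs_of_nonneg (mul_nonneg (mul_nonneg h0 hμ) hπ0)]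
  have hle : M.disc ^ t * M.stateDist π t s * π s a ≤ M.disc ^ t := by nlinarith
  nlinarith [abs_nonneg c, mul_nonneg (mul_nonneg h0 hμ) hπ0]

lemma occ_nonneg (M : FinMDP S A) (π : S → A → ℝ) (hπ : IsPolicy π) (s : S) (a : A) :
    0 ≤ M.occ π s a := by
  refine mul_nonneg (by linarith [M.disc_lt_one]) (tsum_nonneg fun t => ?_)
  exact mul_nonneg (mul_nonneg (pow_nonneg M.disc_pos.le t)
    (stateDist_nonneg M π hπ t s)) (hπ.1 s a)

/-- Key representation of occupancy-weighted sums. -/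
lemma occ_repr (M : FinMDP S A) (π : S → A → ℝ) (hπ : IsPolicy π) (h : S → A → ℝ) :
    ∑ s, ∑ a, M.occ π s a * h s a
      = (1 - M.disc) * ∑' t : ℕ, M.disc ^ t * ∑ s, M.stateDist π t s * ∑ a, π s a * h s a := by
  have hsums : ∀ s a, Summable (fun t => M.disc ^ t * M.stateDist π t s * π s a * h s a) :=
    fun s a => occ_summable M π hπ s a (h s a)
  have e1 : ∀ s a, M.occ π s a * h s a
      = (1 - M.disc) * ∑' t : ℕ, M.disc ^ t * M.stateDist π t s * π s a * h s a := by
    intro s a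
    rw [FinMDP.occ, mul_assoc, ← tsum_mul_right]
  simp_rw [e1, ← Finset.mul_sum]
  congr 1
  have e2 : ∀ s : S, ∑ a, ∑' t : ℕ, M.disc ^ t * M.stateDist π t s * π s a * h s a
      = ∑' t : ℕ, ∑ a, M.disc ^ t * M.stateDist π t s * π s a * h s a :=
    fun s => (Summable.tsum_finsetSum fun a _ => hsums s a).symm
  simp_rw [e2]
  rw [← Summable.tsum_finsetSum (fun s _ => summable_sum fun a _ => hsums s a)]
  refine tsum_congr fun t => ?_
  simp_rw [Finset.mul_sum]
  exact Finset.sum_congr rfl fun s _ => Finset.sum_congr rfl fun a _ => by ring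

lemma occ_sum_one (M : FinMDP S A) (π : S → A → ℝ) (hπ : IsPolicy π) :
    ∑ s, ∑ a, M.occ π s a = 1 := by
  have := occ_repr M π hπ (fun _ _ => 1)
  simp only [mul_one] at this
  simp_rw [hπ.2, mul_one, stateDist_sum_one M π hπ, mul_one] at this
  rw [this, tsum_geometric_of_lt_one M.disc_pos.le M.disc_lt_one]
  have h1 : (0:ℝ) < 1 - M.disc := by linarith [M.disc_lt_one]
  field_simp

lemma u_summable (M : FinMDP S A) (π : S → A → ℝ) (hπ : IsPolicy π) (h : S → A → ℝ)
    (hh0 : ∀ s a, 0 ≤ h s a) :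
    Summable (fun t => M.disc ^ t * ∑ s, M.stateDist π t s * ∑ a, π s a * h s a) := by
  set C : ℝ := ∑ s, ∑ a, h s a with hC
  have hsum : Summable (fun t : ℕ => M.disc ^ t * C) :=
    (summable_geometric_of_lt_one M.disc_pos.le M.disc_lt_one).mul_right _
  refine Summable.of_norm_bounded hsum fun t => ?_
  have hu0 : 0 ≤ ∑ s, M.stateDist π t s * ∑ a, π s a * h s a :=
    Finset.sum_nonneg fun s _ => mul_nonneg (stateDist_nonneg M π hπ t s)
      (Finset.sum_nonneg fun a _ => mul_nonneg (hπ.1 s a) (hh0 s a))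
  have huC : ∑ s, M.stateDist π t s * ∑ a, π s a * h s a ≤ C := by
    rw [hC]
    refine Finset.sum_le_sum fun s _ => ?_
    calc M.stateDist π t s * ∑ a, π s a * h s a ≤ 1 * ∑ a, 1 * h s a := by
          refine mul_le_mul (stateDist_le_one M π hπ t s)
            (Finset.sum_le_sum fun a _ => ?_)
            (Finset.sum_nonneg fun a _ => mul_nonneg (hπ.1 s a) (hh0 s a)) zero_le_one
          exact mul_le_mul_of_nonneg_right (pi_le_one π hπ s a) (hh0 s a)
      _ = ∑ a, h s a := by simp
  have h0 : (0:ℝ) ≤ M.disc ^ t := pow_nonneg M.disc_pos.le t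
  rw [Real.norm_eq_abs, abs_of_nonneg (mul_nonneg h0 hu0)]
  exact mul_le_mul_of_nonneg_left huC h0

/-- The occupancy measure shift inequality: `γ·E_d[P^π h] ≤ E_d[h]` for `h ≥ 0`. -/
lemma occ_step (M : FinMDP S A) (π : S → A → ℝ) (hπ : IsPolicy π) (h : S → A → ℝ)
    (hh0 : ∀ s a, 0 ≤ h s a) :
    M.disc * ∑ s, ∑ a, M.occ π s a * (∑ s', M.P s a s' * ∑ a', π s' a' * h s' a')
      ≤ ∑ s, ∑ a, M.occ π s a * h s a := by
  set u : ℕ → ℝ := fun t => ∑ s, M.stateDist π t s * ∑ a, π s a * h s a with hu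
  have hu0 : ∀ t, 0 ≤ u t := fun t => Finset.sum_nonneg fun s _ => mul_nonneg
    (stateDist_nonneg M π hπ t s)
    (Finset.sum_nonneg fun a _ => mul_nonneg (hπ.1 s a) (hh0 s a))
  have husum : Summable (fun t => M.disc ^ t * u t) := u_summable M π hπ h hh0
  -- the shift identity
  have hshift : ∀ t : ℕ, ∑ s, M.stateDist π t s *
      ∑ a, π s a * (∑ s', M.P s a s' * ∑ a', π s' a' * h s' a') = u (t + 1) := by
    intro t
    have expand : ∀ G : S × A → S × A → ℝ, ∑ p : S × A, ∑ q : S × A, G p q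
        = ∑ x : S, ∑ x1 : A, ∑ x2 : S, ∑ x3 : A, G (x, x1) (x2, x3) := by
      intro G
      rw [Fintype.sum_prod_type (f := fun p : S × A => ∑ q : S × A, G p q)]
      exact Finset.sum_congr rfl fun x _ => Finset.sum_congr rfl fun x1 _ =>
        Fintype.sum_prod_type (f := fun q => G (x, x1) q)
    set G : S × A → S × A → ℝ := fun p q =>
      M.stateDist π t p.1 * (π p.1 p.2 * (M.P p.1 p.2 q.1 * (π q.1 q.2 * h q.1 q.2))) with hG
    have e1 : ∑ x : S, ∑ x1 : A, ∑ x2 : S, ∑ x3 : A, G (x, x1) (x2, x3)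
        = ∑ x : S, ∑ x1 : A, ∑ x2 : S, ∑ x3 : A, G (x2, x3) (x, x1) := by
      rw [← expand G, ← expand (fun p q => G q p)]
      exact Finset.sum_comm
    show _ = ∑ s', (∑ s, ∑ a, M.stateDist π t s * π s a * M.P s a s') * ∑ a', π s' a' * h s' a'
    simp only [Finset.sum_mul, Finset.mul_sum, mul_assoc]
    exact e1
  rw [occ_repr M π hπ h, occ_repr M π hπ (fun s a => ∑ s', M.P s a s' * ∑ a', π s' a' * h s' a')]
  simp_rw [hshift]
  have key : M.disc * ((1 - M.disc) * ∑' t : ℕ, M.disc ^ t * u (t + 1))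
      = (1 - M.disc) * ((∑' t : ℕ, M.disc ^ t * u t) - u 0) := by
    have hshsum : Summable (fun t => M.disc ^ t * u (t + 1)) := by
      have h1 : Summable (fun t : ℕ => M.disc ^ (t + 1) * u (t + 1)) :=
        husum.comp_injective (add_left_injective 1)
      have h2 := h1.mul_left M.disc⁻¹
      refine h2.congr fun t => ?_
      show M.disc⁻¹ * (M.disc ^ (t + 1) * u (t + 1)) = M.disc ^ t * u (t + 1)
      rw [pow_succ', mul_assoc, inv_mul_cancel_left₀ M.disc_pos.ne']
    have hexp : ∑' t : ℕ, M.disc ^ t * u t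
        = M.disc ^ 0 * u 0 + ∑' t : ℕ, M.disc ^ (t + 1) * u (t + 1) :=
      Summable.tsum_eq_zero_add husum
    have : ∑' t : ℕ, M.disc ^ (t + 1) * u (t + 1)
        = M.disc * ∑' t : ℕ, M.disc ^ t * u (t + 1) := by
      rw [← tsum_mul_left]
      exact tsum_congr fun t => by ring
    rw [this] at hexp
    simp only [pow_zero, one_mul] at hexp
    rw [mul_left_comm]
    rw [hexp]
    ring
  rw [key]
  have h1 : (0:ℝ) ≤ 1 - M.disc := by linarith [M.disc_lt_one]
  have := hu0 0
  nlinarith [hu0 0]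

lemma bellman_mem (M : FinMDP S A) (π : S → A → ℝ) (hπ : IsPolicy π) (f : S → A → ℝ)
    (hf : ∀ s a, f s a ∈ Set.Icc 0 (1 / (1 - M.disc))) (s : S) (a : A) :
    M.bellman π f s a ∈ Set.Icc 0 (1 / (1 - M.disc)) := by
  have h1 : (0:ℝ) < 1 - M.disc := by linarith [M.disc_lt_one]
  constructor
  · refine add_nonneg (M.r_nonneg s a) (mul_nonneg M.disc_pos.le ?_)
    refine Finset.sum_nonneg fun s' _ => mul_nonneg (M.P_nonneg s a s') ?_
    exact Finset.sum_nonneg fun a' _ => mul_nonneg (hπ.1 s' a') (hf s' a').1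
  · have hin : ∀ s', ∑ a', π s' a' * f s' a' ≤ 1 / (1 - M.disc) := by
      intro s'
      calc ∑ a', π s' a' * f s' a' ≤ ∑ a', π s' a' * (1 / (1 - M.disc)) :=
            Finset.sum_le_sum fun a' _ => mul_le_mul_of_nonneg_left (hf s' a').2 (hπ.1 s' a')
        _ = 1 / (1 - M.disc) := by rw [← Finset.sum_mul, hπ.2, one_mul]
    have houter : ∑ s', M.P s a s' * ∑ a', π s' a' * f s' a' ≤ 1 / (1 - M.disc) := by
      calc ∑ s', M.P s a s' * ∑ a', π s' a' * f s' a'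
          ≤ ∑ s', M.P s a s' * (1 / (1 - M.disc)) := Finset.sum_le_sum fun s' _ =>
            mul_le_mul_of_nonneg_left (hin s') (M.P_nonneg s a s')
        _ = 1 / (1 - M.disc) := by rw [← Finset.sum_mul, M.P_sum, one_mul]
    have hb : M.bellman π f s a ≤ 1 + M.disc * (1 / (1 - M.disc)) :=
      add_le_add (M.r_le_one s a) (mul_le_mul_of_nonneg_left houter M.disc_pos.le)
    have he : 1 + M.disc * (1 / (1 - M.disc)) = 1 / (1 - M.disc) := by
      field_simp
      ring
    linarith

lemma isQ_mem (M : FinMDP S A) (π Q : S → A → ℝ) (hπ : IsPolicy π) (hQ : M.IsQ π Q)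
    (s : S) (a : A) : Q s a ∈ Set.Icc 0 (1 / (1 - M.disc)) := by
  have h1 : (0:ℝ) < 1 - M.disc := by linarith [M.disc_lt_one]
  have key : ∀ (m : ℝ), (∀ s a, m ≤ Q s a) → ∀ s a,
      M.r s a + M.disc * m ≤ Q s a := by
    intro m hm s a
    rw [hQ s a]
    refine add_le_add le_rfl (mul_le_mul_of_nonneg_left ?_ M.disc_pos.le)
    calc m = ∑ s', M.P s a s' * m := by rw [← Finset.sum_mul, M.P_sum, one_mul]
      _ ≤ ∑ s', M.P s a s' * ∑ a', π s' a' * Q s' a' := by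
          refine Finset.sum_le_sum fun s' _ => mul_le_mul_of_nonneg_left ?_ (M.P_nonneg s a s')
          calc m = ∑ a', π s' a' * m := by rw [← Finset.sum_mul, hπ.2, one_mul]
            _ ≤ ∑ a', π s' a' * Q s' a' := Finset.sum_le_sum fun a' _ =>
                mul_le_mul_of_nonneg_left (hm s' a') (hπ.1 s' a')
  have keyU : ∀ (m : ℝ), (∀ s a, Q s a ≤ m) → ∀ s a,
      Q s a ≤ M.r s a + M.disc * m := by
    intro m hm s a
    rw [hQ s a]
    refine add_le_add le_rfl (mul_le_mul_of_nonneg_left ?_ M.disc_pos.le)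
    calc ∑ s', M.P s a s' * ∑ a', π s' a' * Q s' a'
        ≤ ∑ s', M.P s a s' * m := by
          refine Finset.sum_le_sum fun s' _ => mul_le_mul_of_nonneg_left ?_ (M.P_nonneg s a s')
          calc ∑ a', π s' a' * Q s' a' ≤ ∑ a', π s' a' * m := Finset.sum_le_sum fun a' _ =>
                mul_le_mul_of_nonneg_left (hm s' a') (hπ.1 s' a')
            _ = m := by rw [← Finset.sum_mul, hπ.2, one_mul]
      _ = m := by rw [← Finset.sum_mul, M.P_sum, one_mul]
  obtain ⟨pmin, -, hmin⟩ := Finset.exists_min_image (Finset.univ : Finset (S × A))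
    (fun p => Q p.1 p.2) Finset.univ_nonempty
  obtain ⟨pmax, -, hmax⟩ := Finset.exists_max_image (Finset.univ : Finset (S × A))
    (fun p => Q p.1 p.2) Finset.univ_nonempty
  have hmin' : ∀ s a, Q pmin.1 pmin.2 ≤ Q s a := fun s a => hmin (s, a) (Finset.mem_univ _)
  have hmax' : ∀ s a, Q s a ≤ Q pmax.1 pmax.2 := fun s a => hmax (s, a) (Finset.mem_univ _)
  have hlow : 0 ≤ Q pmin.1 pmin.2 := by
    have := key _ hmin' pmin.1 pmin.2
    have hr := M.r_nonneg pmin.1 pmin.2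
    nlinarith [M.disc_pos, M.disc_lt_one]
  have hhigh : Q pmax.1 pmax.2 ≤ 1 / (1 - M.disc) := by
    have := keyU _ hmax' pmax.1 pmax.2
    have hr := M.r_le_one pmax.1 pmax.2
    rw [le_div_iff₀ h1]
    nlinarith [M.disc_pos, M.disc_lt_one]
  exact ⟨le_trans hlow (hmin' s a), le_trans (hmax' s a) hhigh⟩

lemma bellman_contract (M : FinMDP S A) (π Q : S → A → ℝ) (hπ : IsPolicy π) (hQ : M.IsQ π Q)
    (g : S → A → ℝ) (s : S) (a : A) :
    (M.bellman π g s a - Q s a) ^ 2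
      ≤ M.disc ^ 2 * ∑ s', M.P s a s' * ∑ a', π s' a' * (g s' a' - Q s' a') ^ 2 := by
  have hdiff : M.bellman π g s a - Q s a
      = M.disc * ∑ s', M.P s a s' * ∑ a', π s' a' * (g s' a' - Q s' a') := by
    have inner : ∀ s', ∑ a', π s' a' * (g s' a' - Q s' a')
        = (∑ a', π s' a' * g s' a') - ∑ a', π s' a' * Q s' a' := by
      intro s'; rw [← Finset.sum_sub_distrib]
      exact Finset.sum_congr rfl fun a' _ => by ring
    have outer : ∑ s', M.P s a s' * ∑ a', π s' a' * (g s' a' - Q s' a')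
        = (∑ s', M.P s a s' * ∑ a', π s' a' * g s' a')
          - ∑ s', M.P s a s' * ∑ a', π s' a' * Q s' a' := by
      rw [← Finset.sum_sub_distrib]
      refine Finset.sum_congr rfl fun s' _ => ?_
      rw [inner s']; ring
    rw [outer, hQ s a]
    simp only [FinMDP.bellman]
    ring
  have j1 := jensen_sq Finset.univ (M.P s a)
    (fun s' => ∑ a', π s' a' * (g s' a' - Q s' a'))
    (fun s' _ => M.P_nonneg s a s') (M.P_sum s a)
  have j2 : ∀ s', (∑ a', π s' a' * (g s' a' - Q s' a')) ^ 2
      ≤ ∑ a', π s' a' * (g s' a' - Q s' a') ^ 2 := fun s' =>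
    jensen_sq Finset.univ (π s') (fun a' => g s' a' - Q s' a') (fun a' _ => hπ.1 s' a') (hπ.2 s')
  have hmain : (∑ s', M.P s a s' * ∑ a', π s' a' * (g s' a' - Q s' a')) ^ 2
      ≤ ∑ s', M.P s a s' * ∑ a', π s' a' * (g s' a' - Q s' a') ^ 2 :=
    j1.trans (Finset.sum_le_sum fun s' _ =>
      mul_le_mul_of_nonneg_left (j2 s') (M.P_nonneg s a s'))
  rw [hdiff, mul_pow]
  exact mul_le_mul_of_nonneg_left hmain (sq_nonneg _)

end Aux

set_option maxHeartbeats 1000000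

/-- Fitted policy evaluation on-policy recursion (deterministic core of HPE). -/
theorem stmt11 (M : FinMDP S A) (π Q : S → A → ℝ) (hπ : IsPolicy π) (hQ : M.IsQ π Q)
    (ν : S → A → ℝ) (hν0 : ∀ s a, 0 ≤ ν s a) (hν1 : ∑ s, ∑ a, ν s a = 1)
    (lam ε εbe : ℝ) (hlam : 1 ≤ lam) (hε : 0 ≤ ε)
    (hεbe0 : 0 ≤ εbe) (hεbe1 : εbe ≤ 2 / (1 - M.disc))
    (K : ℕ) (f : ℕ → S → A → ℝ)
    (hfmem : ∀ k ≤ K, ∀ s a, f k s a ∈ Set.Icc 0 (1 / (1 - M.disc)))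
    (horacle : ∀ k, 1 ≤ k → k ≤ K → ∃ g : S → A → ℝ,
      (∀ s a, g s a ∈ Set.Icc 0 (1 / (1 - M.disc))) ∧
      (∀ s a, |g s a - M.bellman π (f (k - 1)) s a| ≤ εbe) ∧
      ((∑ s, ∑ a, ν s a * (f k s a - M.bellman π (f (k - 1)) s a) ^ 2)
          + lam * ∑ s, ∑ a, M.occ π s a * (f k s a - Q s a) ^ 2
        ≤ (∑ s, ∑ a, ν s a * (g s a - M.bellman π (f (k - 1)) s a) ^ 2)
          + lam * (∑ s, ∑ a, M.occ π s a * (g s a - Q s a) ^ 2) + ε)) :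
    ∀ k, 1 ≤ k → k ≤ K →
      ∑ s, ∑ a, M.occ π s a * (f k s a - Q s a) ^ 2
        ≤ M.disc ^ (k - 1) / (1 - M.disc) ^ 2
          + (1 / (1 - M.disc)) * (6 * εbe / (1 - M.disc) + ε / lam) := by
  have hγ0 := M.disc_pos
  have hγ1 := M.disc_lt_one
  have h1 : (0:ℝ) < 1 - M.disc := by linarith
  have hlam0 : (0:ℝ) < lam := by linarith
  set c : ℝ := 6 * εbe / (1 - M.disc) + ε / lam with hc
  clear_value c
  have hc0 : 0 ≤ c := by
    rw [hc]
    exact add_nonneg (div_nonneg (by linarith) h1.le) (div_nonneg hε hlam0.le)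
  have hQmem : ∀ s a, Q s a ∈ Set.Icc 0 (1 / (1 - M.disc)) := isQ_mem M π Q hπ hQ
  have hocc0 : ∀ s a, 0 ≤ M.occ π s a := occ_nonneg M π hπ
  have hconst : ∀ C : ℝ, ∑ s, ∑ a, M.occ π s a * C = C := by
    intro C
    simp_rw [← Finset.sum_mul]
    rw [occ_sum_one M π hπ, one_mul]
  have hbe2 : εbe ^ 2 ≤ 2 * εbe / (1 - M.disc) := by
    calc εbe ^ 2 = εbe * εbe := sq εbe
      _ ≤ εbe * (2 / (1 - M.disc)) := mul_le_mul_of_nonneg_left hεbe1 hεbe0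
      _ = 2 * εbe / (1 - M.disc) := by ring
  -- one-step recursion
  have hstep : ∀ j, 1 ≤ j → j ≤ K →
      ∑ s, ∑ a, M.occ π s a * (f j s a - Q s a) ^ 2
        ≤ M.disc * (∑ s, ∑ a, M.occ π s a * (f (j - 1) s a - Q s a) ^ 2) + c := by
    intro j hj1 hjK
    obtain ⟨g, hg_mem, hg_be, hg_or⟩ := horacle j hj1 hjK
    have hfj1 : ∀ s a, f (j - 1) s a ∈ Set.Icc 0 (1 / (1 - M.disc)) :=
      hfmem (j - 1) (le_trans (Nat.sub_le j 1) hjK)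
    have hTmem : ∀ s a, M.bellman π (f (j - 1)) s a ∈ Set.Icc 0 (1 / (1 - M.disc)) :=
      bellman_mem M π hπ (f (j - 1)) hfj1
    -- ν term for f j is nonneg
    have hν_f : 0 ≤ ∑ s, ∑ a, ν s a * (f j s a - M.bellman π (f (j - 1)) s a) ^ 2 :=
      Finset.sum_nonneg fun s _ => Finset.sum_nonneg fun a _ =>
        mul_nonneg (hν0 s a) (sq_nonneg _)
    -- ν term for g is ≤ εbe²
    have hν_g : ∑ s, ∑ a, ν s a * (g s a - M.bellman π (f (j - 1)) s a) ^ 2 ≤ εbe ^ 2 := by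
      have hpt : ∀ s a, (g s a - M.bellman π (f (j - 1)) s a) ^ 2 ≤ εbe ^ 2 := by
        intro s a
        have := abs_le.1 (hg_be s a)
        nlinarith [this.1, this.2]
      calc ∑ s, ∑ a, ν s a * (g s a - M.bellman π (f (j - 1)) s a) ^ 2
          ≤ ∑ s, ∑ a, ν s a * εbe ^ 2 := Finset.sum_le_sum fun s _ =>
            Finset.sum_le_sum fun a _ => mul_le_mul_of_nonneg_left (hpt s a) (hν0 s a)
        _ = εbe ^ 2 := by simp_rw [← Finset.sum_mul]; rw [hν1, one_mul]
    -- occupancy term for g, compared to T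
    have hocc_g : ∑ s, ∑ a, M.occ π s a * (g s a - Q s a) ^ 2
        ≤ (∑ s, ∑ a, M.occ π s a * (M.bellman π (f (j - 1)) s a - Q s a) ^ 2)
          + (2 * εbe / (1 - M.disc) + εbe ^ 2) := by
      have hpt : ∀ s a, (g s a - Q s a) ^ 2
          ≤ (M.bellman π (f (j - 1)) s a - Q s a) ^ 2
            + (2 * εbe / (1 - M.disc) + εbe ^ 2) := by
        intro s a
        obtain ⟨hd1, hd2⟩ := abs_le.1 (hg_be s a)
        obtain ⟨hT1, hT2⟩ := hTmem s a
        obtain ⟨hQ1, hQ2⟩ := hQmem s a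
        set B : ℝ := 1 / (1 - M.disc)
        have hB0 : 0 ≤ B := by positivity
        have hbee : εbe ^ 2 ≤ 2 * εbe * B := by
          have : 2 * εbe / (1 - M.disc) = 2 * εbe * B := by rw [div_eq_mul_one_div]
          linarith [hbe2, this]
        have hx1 : M.bellman π (f (j - 1)) s a - Q s a ≤ B := by linarith
        have hx2 : -B ≤ M.bellman π (f (j - 1)) s a - Q s a := by linarith
        have key : (g s a - Q s a) ^ 2
            ≤ (M.bellman π (f (j - 1)) s a - Q s a) ^ 2 + 2 * εbe * B + εbe ^ 2 := by
          nlinarith [mul_nonneg (sub_nonneg.2 hx1) (sub_nonneg.2 hd2),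
            mul_nonneg (by linarith : (0:ℝ) ≤ B + (M.bellman π (f (j - 1)) s a - Q s a))
              (by linarith : (0:ℝ) ≤ εbe - (g s a - M.bellman π (f (j - 1)) s a)),
            mul_nonneg (sub_nonneg.2 hx1)
              (by linarith : (0:ℝ) ≤ εbe + (g s a - M.bellman π (f (j - 1)) s a)),
            mul_nonneg (by linarith : (0:ℝ) ≤ εbe - (g s a - M.bellman π (f (j - 1)) s a))
              (by linarith : (0:ℝ) ≤ εbe + (g s a - M.bellman π (f (j - 1)) s a))]
        have : 2 * εbe * B = 2 * εbe / (1 - M.disc) := (div_eq_mul_one_div _ _).symm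
        linarith
      calc ∑ s, ∑ a, M.occ π s a * (g s a - Q s a) ^ 2
          ≤ ∑ s, ∑ a, M.occ π s a * ((M.bellman π (f (j - 1)) s a - Q s a) ^ 2
              + (2 * εbe / (1 - M.disc) + εbe ^ 2)) := Finset.sum_le_sum fun s _ =>
            Finset.sum_le_sum fun a _ => mul_le_mul_of_nonneg_left (hpt s a) (hocc0 s a)
        _ = (∑ s, ∑ a, M.occ π s a * (M.bellman π (f (j - 1)) s a - Q s a) ^ 2)
              + ∑ s, ∑ a, M.occ π s a * (2 * εbe / (1 - M.disc) + εbe ^ 2) := by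
            simp_rw [mul_add, Finset.sum_add_distrib]
        _ = _ := by rw [hconst]
    -- contraction of the T-term
    have hTQ : ∑ s, ∑ a, M.occ π s a * (M.bellman π (f (j - 1)) s a - Q s a) ^ 2
        ≤ M.disc * ∑ s, ∑ a, M.occ π s a * (f (j - 1) s a - Q s a) ^ 2 := by
      have step1 : ∑ s, ∑ a, M.occ π s a * (M.bellman π (f (j - 1)) s a - Q s a) ^ 2
          ≤ ∑ s, ∑ a, M.occ π s a * (M.disc ^ 2
              * ∑ s', M.P s a s' * ∑ a', π s' a' * (f (j - 1) s' a' - Q s' a') ^ 2) :=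
        Finset.sum_le_sum fun s _ => Finset.sum_le_sum fun a _ =>
          mul_le_mul_of_nonneg_left (bellman_contract M π Q hπ hQ (f (j - 1)) s a) (hocc0 s a)
      have step2 : ∑ s, ∑ a, M.occ π s a * (M.disc ^ 2
              * ∑ s', M.P s a s' * ∑ a', π s' a' * (f (j - 1) s' a' - Q s' a') ^ 2)
          = M.disc * (M.disc * ∑ s, ∑ a, M.occ π s a
              * ∑ s', M.P s a s' * ∑ a', π s' a' * (f (j - 1) s' a' - Q s' a') ^ 2) := by
        have hpt2 : ∀ (s : S) (a : A), M.occ π s a * (M.disc ^ 2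
              * ∑ s', M.P s a s' * ∑ a', π s' a' * (f (j - 1) s' a' - Q s' a') ^ 2)
            = M.disc * (M.disc * (M.occ π s a
              * ∑ s', M.P s a s' * ∑ a', π s' a' * (f (j - 1) s' a' - Q s' a') ^ 2)) :=
          fun s a => by ring
        simp_rw [hpt2, ← Finset.mul_sum]
      have step3 := occ_step M π hπ (fun s' a' => (f (j - 1) s' a' - Q s' a') ^ 2)
        (fun s' a' => sq_nonneg _)
      calc ∑ s, ∑ a, M.occ π s a * (M.bellman π (f (j - 1)) s a - Q s a) ^ 2
          ≤ M.disc * (M.disc * ∑ s, ∑ a, M.occ π s a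
              * ∑ s', M.P s a s' * ∑ a', π s' a' * (f (j - 1) s' a' - Q s' a') ^ 2) := by
            rw [← step2]; exact step1
        _ ≤ M.disc * ∑ s, ∑ a, M.occ π s a * (f (j - 1) s a - Q s a) ^ 2 :=
            mul_le_mul_of_nonneg_left step3 hγ0.le
    -- combine
    rw [← mul_le_mul_iff_right₀ hlam0]
    have hεlam : lam * (ε / lam) = ε := by field_simp
    have h2' := mul_le_mul_of_nonneg_left
      (hocc_g.trans (by linarith [hTQ] :
        (∑ s, ∑ a, M.occ π s a * (M.bellman π (f (j - 1)) s a - Q s a) ^ 2)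
          + (2 * εbe / (1 - M.disc) + εbe ^ 2)
        ≤ M.disc * (∑ s, ∑ a, M.occ π s a * (f (j - 1) s a - Q s a) ^ 2)
          + (2 * εbe / (1 - M.disc) + εbe ^ 2))) hlam0.le
    have hbe3 : εbe ^ 2 ≤ lam * (2 * εbe / (1 - M.disc)) := by
      have h2be : 0 ≤ 2 * εbe / (1 - M.disc) := div_nonneg (by linarith) h1.le
      have := mul_le_mul_of_nonneg_right hlam h2be
      linarith
    have hbe4 : lam * εbe ^ 2 ≤ lam * (2 * εbe / (1 - M.disc)) :=
      mul_le_mul_of_nonneg_left hbe2 hlam0.le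
    have hlamc : lam * c = lam * (6 * εbe / (1 - M.disc)) + ε := by
      rw [hc, mul_add, hεlam]
    have hexpand : lam * (M.disc * (∑ s, ∑ a, M.occ π s a * (f (j - 1) s a - Q s a) ^ 2) + c)
        = lam * (M.disc * (∑ s, ∑ a, M.occ π s a * (f (j - 1) s a - Q s a) ^ 2))
          + lam * (6 * εbe / (1 - M.disc)) + ε := by
      rw [mul_add, hlamc, ← add_assoc]
    rw [hexpand]
    have h2eq : lam * (M.disc * (∑ s, ∑ a, M.occ π s a * (f (j - 1) s a - Q s a) ^ 2)
          + (2 * εbe / (1 - M.disc) + εbe ^ 2))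
        = lam * (M.disc * (∑ s, ∑ a, M.occ π s a * (f (j - 1) s a - Q s a) ^ 2))
          + lam * (2 * εbe / (1 - M.disc)) + lam * εbe ^ 2 := by ring
    have heq6 : lam * (6 * εbe / (1 - M.disc)) = 3 * (lam * (2 * εbe / (1 - M.disc))) := by
      ring
    linarith [hg_or, hν_f, hν_g, h2', h2eq, hbe3, hbe4, heq6]
  -- base case bound
  have hbase : ∑ s, ∑ a, M.occ π s a * (f 0 s a - Q s a) ^ 2 ≤ 1 / (1 - M.disc) ^ 2 := by
    have hpt : ∀ s a, (f 0 s a - Q s a) ^ 2 ≤ 1 / (1 - M.disc) ^ 2 := by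
      intro s a
      obtain ⟨hf1, hf2⟩ := hfmem 0 (Nat.zero_le K) s a
      obtain ⟨hQ1, hQ2⟩ := hQmem s a
      have : (f 0 s a - Q s a) ^ 2 ≤ (1 / (1 - M.disc)) ^ 2 := by nlinarith
      calc (f 0 s a - Q s a) ^ 2 ≤ (1 / (1 - M.disc)) ^ 2 := this
        _ = 1 / (1 - M.disc) ^ 2 := by rw [div_pow, one_pow]
    calc ∑ s, ∑ a, M.occ π s a * (f 0 s a - Q s a) ^ 2
        ≤ ∑ s, ∑ a, M.occ π s a * (1 / (1 - M.disc) ^ 2) := Finset.sum_le_sum fun s _ =>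
          Finset.sum_le_sum fun a _ => mul_le_mul_of_nonneg_left (hpt s a) (hocc0 s a)
      _ = 1 / (1 - M.disc) ^ 2 := hconst _
  have hcdiv : c ≤ c / (1 - M.disc) := by
    rw [le_div_iff₀ h1]
    nlinarith [mul_nonneg hc0 hγ0.le]
  -- main induction
  have main : ∀ j, 1 ≤ j → j ≤ K →
      ∑ s, ∑ a, M.occ π s a * (f j s a - Q s a) ^ 2
        ≤ M.disc ^ (j - 1) / (1 - M.disc) ^ 2 + c / (1 - M.disc) := by
    intro j
    induction j with
    | zero => intro h; omega
    | succ n ih =>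
      intro _ hK
      rcases Nat.eq_zero_or_pos n with h0 | hpos
      · subst h0
        have h01 := hstep 1 le_rfl hK
        simp only [Nat.sub_self] at h01
        simp only [Nat.zero_add, Nat.sub_self, pow_zero]
        have : M.disc * (∑ s, ∑ a, M.occ π s a * (f 0 s a - Q s a) ^ 2)
            ≤ M.disc * (1 / (1 - M.disc) ^ 2) := mul_le_mul_of_nonneg_left hbase hγ0.le
        have hp : (0:ℝ) < 1 / (1 - M.disc) ^ 2 := by positivity
        have hd : M.disc * (1 / (1 - M.disc) ^ 2) ≤ 1 / (1 - M.disc) ^ 2 :=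
          mul_le_of_le_one_left hp.le hγ1.le
        have key1 : ∑ s, ∑ a, M.occ π s a * (f 1 s a - Q s a) ^ 2
            ≤ 1 / (1 - M.disc) ^ 2 + c / (1 - M.disc) := by linarith only [h01, this, hd, hcdiv]
        exact key1
      · have hn1 : 1 ≤ n := hpos
        have hnK : n ≤ K := by omega
        have ihn := ih hn1 hnK
        have hst := hstep (n + 1) (by omega) hK
        simp only [Nat.add_sub_cancel] at hst
        have hmul := mul_le_mul_of_nonneg_left ihn hγ0.le
        have hpow : M.disc * (M.disc ^ (n - 1) / (1 - M.disc) ^ 2)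
            = M.disc ^ n / (1 - M.disc) ^ 2 := by
          rw [mul_div_assoc', ← pow_succ']
          congr 2
          omega
        have hcc : M.disc * (c / (1 - M.disc)) + c = c / (1 - M.disc) := by
          field_simp
          ring
        simp only [Nat.add_sub_cancel]
        rw [mul_add, hpow] at hmul
        linarith [hst, hmul, hcc]
  intro k hk1 hkK
  have hmk := main k hk1 hkK
  rw [hc] at hmk
  rw [hc]
  have heq : (1 / (1 - M.disc)) * (6 * εbe / (1 - M.disc) + ε / lam)
      = (6 * εbe / (1 - M.disc) + ε / lam) / (1 - M.disc) := by ring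
  linarith only [hmk, heq]
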